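/- For every natural number n, the number of permutations of {1,…,n} that avoid the pattern (3,1,2) equals the n-th Catalan number C_n. -/

import Mathlib

set_option linter.unusedSectionVars false
set_option linter.unnecessarySimpa false
set_option linter.unusedVariables false

open Finset Equiv

def Av (n : ℕ) : Finset (Equiv.Perm (Fin n)) :=
  Finset.univ.filter (fun ρ => ∀ a b c : Fin n, a < b → b < c → ¬(ρ b < ρ c ∧ ρ c < ρ a))

variable {n i : ℕ}

def glueFun (hi : i ≤ n) (σ : Equiv.Perm (Fin i)) (τ : Equiv.Perm (Fin (n - i)))
    (j : Fin (n + 1)) : Fin (n + 1) :=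
  if h : (j : ℕ) < i then
    ⟨(σ ⟨j, h⟩ : ℕ) + 1, by have := (σ ⟨j, h⟩).isLt; omega⟩
  else if h2 : (j : ℕ) = i then ⟨0, Nat.succ_pos n⟩
  else
    ⟨(τ ⟨(j : ℕ) - (i + 1), by have := j.isLt; omega⟩ : ℕ) + i + 1,
      by have := (τ ⟨(j : ℕ) - (i + 1), by have := j.isLt; omega⟩).isLt; omega⟩

lemma glueFun_lt (hi : i ≤ n) (σ : Equiv.Perm (Fin i)) (τ : Equiv.Perm (Fin (n - i)))
    (j : Fin (n + 1)) (k : Fin i) (hk : (j : ℕ) = (k : ℕ)) :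
    (glueFun hi σ τ j : ℕ) = (σ k : ℕ) + 1 := by
  have h : (j : ℕ) < i := by have := k.isLt; omega
  simp only [glueFun, dif_pos h, Fin.val_mk]
  have : (⟨(j : ℕ), h⟩ : Fin i) = k := Fin.ext hk
  rw [this]

lemma glueFun_eq (hi : i ≤ n) (σ : Equiv.Perm (Fin i)) (τ : Equiv.Perm (Fin (n - i)))
    (j : Fin (n + 1)) (h : (j : ℕ) = i) :
    (glueFun hi σ τ j : ℕ) = 0 := by
  simp [glueFun, dif_neg (by omega : ¬ (j : ℕ) < i), dif_pos h]

lemma glueFun_gt (hi : i ≤ n) (σ : Equiv.Perm (Fin i)) (τ : Equiv.Perm (Fin (n - i)))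
    (j : Fin (n + 1)) (k : Fin (n - i)) (hk : (j : ℕ) = (k : ℕ) + i + 1) :
    (glueFun hi σ τ j : ℕ) = (τ k : ℕ) + i + 1 := by
  have h1 : ¬ (j : ℕ) < i := by omega
  have h2 : ¬ (j : ℕ) = i := by omega
  simp only [glueFun, dif_neg h1, dif_neg h2, Fin.val_mk]
  congr 3
  exact Fin.ext (by simp [hk])


lemma glueFun_inj (hi : i ≤ n) (σ : Equiv.Perm (Fin i)) (τ : Equiv.Perm (Fin (n - i))) :
    Function.Injective (glueFun hi σ τ) := by
  intro j1 j2 h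
  have hv : (glueFun hi σ τ j1 : ℕ) = (glueFun hi σ τ j2 : ℕ) := congrArg Fin.val h
  rcases lt_trichotomy (j1 : ℕ) i with h1 | h1 | h1 <;>
    rcases lt_trichotomy (j2 : ℕ) i with h2 | h2 | h2
  · rw [glueFun_lt hi σ τ j1 ⟨j1, h1⟩ rfl, glueFun_lt hi σ τ j2 ⟨j2, h2⟩ rfl] at hv
    have : σ ⟨j1, h1⟩ = σ ⟨j2, h2⟩ := Fin.ext (by omega)
    have := congrArg Fin.val (σ.injective this)
    exact Fin.ext (by simpa using this)
  · rw [glueFun_lt hi σ τ j1 ⟨j1, h1⟩ rfl, glueFun_eq hi σ τ j2 h2] at hv; omega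
  · rw [glueFun_lt hi σ τ j1 ⟨j1, h1⟩ rfl,
      glueFun_gt hi σ τ j2 ⟨(j2 : ℕ) - (i + 1), by have := j2.isLt; omega⟩ (by simp; omega)] at hv
    have := (σ ⟨j1, h1⟩).isLt; omega
  · rw [glueFun_eq hi σ τ j1 h1, glueFun_lt hi σ τ j2 ⟨j2, h2⟩ rfl] at hv; omega
  · exact Fin.ext (by omega)
  · rw [glueFun_eq hi σ τ j1 h1,
      glueFun_gt hi σ τ j2 ⟨(j2 : ℕ) - (i + 1), by have := j2.isLt; omega⟩ (by simp; omega)] at hv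
    omega
  · rw [glueFun_gt hi σ τ j1 ⟨(j1 : ℕ) - (i + 1), by have := j1.isLt; omega⟩ (by simp; omega),
      glueFun_lt hi σ τ j2 ⟨j2, h2⟩ rfl] at hv
    have := (σ ⟨j2, h2⟩).isLt; omega
  · rw [glueFun_gt hi σ τ j1 ⟨(j1 : ℕ) - (i + 1), by have := j1.isLt; omega⟩ (by simp; omega),
      glueFun_eq hi σ τ j2 h2] at hv
    omega
  · rw [glueFun_gt hi σ τ j1 ⟨(j1 : ℕ) - (i + 1), by have := j1.isLt; omega⟩ (by simp; omega),
      glueFun_gt hi σ τ j2 ⟨(j2 : ℕ) - (i + 1), by have := j2.isLt; omega⟩ (by simp; omega)] at hv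
    have : τ ⟨(j1 : ℕ) - (i + 1), by have := j1.isLt; omega⟩
        = τ ⟨(j2 : ℕ) - (i + 1), by have := j2.isLt; omega⟩ := Fin.ext (by omega)
    have := congrArg Fin.val (τ.injective this)
    simp only [Fin.val_mk] at this
    exact Fin.ext (by omega)

noncomputable def glue (hi : i ≤ n) (σ : Equiv.Perm (Fin i)) (τ : Equiv.Perm (Fin (n - i))) :
    Equiv.Perm (Fin (n + 1)) :=
  Equiv.ofBijective (glueFun hi σ τ) (Finite.injective_iff_bijective.mp (glueFun_inj hi σ τ))

@[simp] lemma glue_apply (hi : i ≤ n) (σ : Equiv.Perm (Fin i)) (τ : Equiv.Perm (Fin (n - i)))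
    (j : Fin (n + 1)) : glue hi σ τ j = glueFun hi σ τ j := rfl

lemma mem_Av {ρ : Equiv.Perm (Fin n)} :
    ρ ∈ Av n ↔ ∀ a b c : Fin n, a < b → b < c → ¬(ρ b < ρ c ∧ ρ c < ρ a) := by
  simp [Av]

section struct

variable {ρ : Equiv.Perm (Fin (n + 1))} (hρ : ρ ∈ Av (n + 1)) (hi : i ≤ n)
  (hfi : ((ρ.symm 0 : Fin (n + 1)) : ℕ) = i)

include hρ hi hfi

lemma apply_mid : ρ ⟨i, by omega⟩ = 0 := by
  have : ρ.symm 0 = ⟨i, by omega⟩ := Fin.ext hfi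
  rw [← this, Equiv.apply_symm_apply]

lemma key_mono {a c : Fin (n + 1)} (ha : (a : ℕ) < i) (hc : i < (c : ℕ)) : ρ a < ρ c := by
  have h3 := mem_Av.mp hρ a ⟨i, by omega⟩ c (by simpa [Fin.lt_def] using ha)
    (by simpa [Fin.lt_def] using hc)
  have h0 : (ρ ⟨i, by omega⟩ : ℕ) = 0 := by rw [apply_mid hρ hi hfi]; rfl
  have hcne : (ρ c : ℕ) ≠ 0 := by
    intro h
    have : ρ c = ρ ⟨i, by omega⟩ := Fin.ext (by omega)
    have := congrArg Fin.val (ρ.injective this)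
    simp only [Fin.val_mk] at this; omega
  have hane : (ρ a : ℕ) ≠ (ρ c : ℕ) := by
    intro h
    have := congrArg Fin.val (ρ.injective (Fin.ext h : ρ a = ρ c))
    omega
  simp only [Fin.lt_def, h0, not_and, not_lt] at h3
  have := h3 (by omega)
  simp only [Fin.lt_def]
  omega

lemma val_low {j : Fin (n + 1)} (hj : (j : ℕ) < i) : 1 ≤ (ρ j : ℕ) ∧ (ρ j : ℕ) ≤ i := by
  constructor
  · rcases Nat.eq_zero_or_pos (ρ j : ℕ) with h | h
    · exfalso
      have : ρ j = ρ ⟨i, by omega⟩ := Fin.ext (by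
        rw [show (ρ ⟨i, by omega⟩ : ℕ) = 0 by rw [apply_mid hρ hi hfi]; rfl]; omega)
      have := congrArg Fin.val (ρ.injective this)
      simp only [Fin.val_mk] at this; omega
    · omega
  · have hsub : (Finset.Ioi (⟨i, by omega⟩ : Fin (n + 1))).image ρ ⊆ Finset.Ioi (ρ j) := by
      intro v hv
      simp only [Finset.mem_image, Finset.mem_Ioi] at hv ⊢
      obtain ⟨c, hc, rfl⟩ := hv
      exact key_mono hρ hi hfi hj (by simpa [Fin.lt_def] using hc)
    have hcard := Finset.card_le_card hsub
    rw [Finset.card_image_of_injective _ ρ.injective, Fin.card_Ioi, Fin.card_Ioi] at hcard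
    simp only [Fin.val_mk] at hcard
    have := (ρ j).isLt
    omega

lemma val_high {j : Fin (n + 1)} (hj : i < (j : ℕ)) : i + 1 ≤ (ρ j : ℕ) := by
  have hjne : (ρ j : ℕ) ≠ 0 := by
    intro h
    have : ρ j = ρ ⟨i, by omega⟩ := Fin.ext (by
      rw [show (ρ ⟨i, by omega⟩ : ℕ) = 0 by rw [apply_mid hρ hi hfi]; rfl]; omega)
    have := congrArg Fin.val (ρ.injective this)
    simp only [Fin.val_mk] at this; omega
  have hsub : (Finset.Iic (⟨i, by omega⟩ : Fin (n + 1))).image ρ ⊆ Finset.Iio (ρ j) := by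
    intro v hv
    simp only [Finset.mem_image, Finset.mem_Iic] at hv
    obtain ⟨c, hc, rfl⟩ := hv
    simp only [Finset.mem_Iio]
    have hc' : (c : ℕ) ≤ i := by simpa [Fin.le_def] using hc
    rcases lt_or_eq_of_le hc' with h | h
    · exact key_mono hρ hi hfi h hj
    · have : ρ c = ρ ⟨i, by omega⟩ := by congr 1; exact Fin.ext h
      rw [this]
      simp only [Fin.lt_def]
      rw [show (ρ ⟨i, by omega⟩ : ℕ) = 0 by rw [apply_mid hρ hi hfi]; rfl]
      omega
  have hcard := Finset.card_le_card hsub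
  rw [Finset.card_image_of_injective _ ρ.injective, Fin.card_Iic, Fin.card_Iio] at hcard
  simp only [Fin.val_mk] at hcard
  omega

end struct

def extLFun (ρ : Equiv.Perm (Fin (n + 1))) (hi : i ≤ n)
    (hlow : ∀ j : Fin (n + 1), (j : ℕ) < i → 1 ≤ (ρ j : ℕ) ∧ (ρ j : ℕ) ≤ i)
    (j : Fin i) : Fin i :=
  ⟨(ρ ⟨j, by omega⟩ : ℕ) - 1, by
    have := hlow ⟨j, by omega⟩ (by simpa using j.isLt); omega⟩

lemma extLFun_inj (ρ : Equiv.Perm (Fin (n + 1))) (hi : i ≤ n) (hlow) :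
    Function.Injective (extLFun ρ hi hlow) := by
  intro j1 j2 h
  have hv := congrArg Fin.val h
  simp only [extLFun, Fin.val_mk] at hv
  have h1 := hlow ⟨j1, by omega⟩ (by simpa using j1.isLt)
  have h2 := hlow ⟨j2, by omega⟩ (by simpa using j2.isLt)
  have : ρ ⟨j1, by omega⟩ = ρ ⟨j2, by omega⟩ := Fin.ext (by omega)
  have := congrArg Fin.val (ρ.injective this)
  exact Fin.ext (by simpa using this)

noncomputable def extL (ρ : Equiv.Perm (Fin (n + 1))) (hi : i ≤ n)
    (hlow : ∀ j : Fin (n + 1), (j : ℕ) < i → 1 ≤ (ρ j : ℕ) ∧ (ρ j : ℕ) ≤ i) :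
    Equiv.Perm (Fin i) :=
  Equiv.ofBijective (extLFun ρ hi hlow) (Finite.injective_iff_bijective.mp (extLFun_inj ρ hi hlow))

@[simp] lemma extL_apply (ρ : Equiv.Perm (Fin (n + 1))) (hi : i ≤ n) (hlow) (j : Fin i) :
    extL ρ hi hlow j = extLFun ρ hi hlow j := rfl

def extRFun (ρ : Equiv.Perm (Fin (n + 1))) (hi : i ≤ n)
    (hhigh : ∀ j : Fin (n + 1), i < (j : ℕ) → i + 1 ≤ (ρ j : ℕ))
    (j : Fin (n - i)) : Fin (n - i) :=
  ⟨(ρ ⟨(j : ℕ) + i + 1, by have := j.isLt; omega⟩ : ℕ) - (i + 1), by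
    have := hhigh ⟨(j : ℕ) + i + 1, by have := j.isLt; omega⟩ (by simp)
    have := (ρ ⟨(j : ℕ) + i + 1, by have := j.isLt; omega⟩).isLt
    omega⟩

lemma extRFun_inj (ρ : Equiv.Perm (Fin (n + 1))) (hi : i ≤ n) (hhigh) :
    Function.Injective (extRFun ρ hi hhigh) := by
  intro j1 j2 h
  have hv := congrArg Fin.val h
  simp only [extRFun, Fin.val_mk] at hv
  have h1 := hhigh ⟨(j1 : ℕ) + i + 1, by have := j1.isLt; omega⟩ (by simp)
  have h2 := hhigh ⟨(j2 : ℕ) + i + 1, by have := j2.isLt; omega⟩ (by simp)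
  have : ρ ⟨(j1 : ℕ) + i + 1, by have := j1.isLt; omega⟩
      = ρ ⟨(j2 : ℕ) + i + 1, by have := j2.isLt; omega⟩ := Fin.ext (by omega)
  have := congrArg Fin.val (ρ.injective this)
  simp only [Fin.val_mk] at this
  exact Fin.ext (by omega)

noncomputable def extR (ρ : Equiv.Perm (Fin (n + 1))) (hi : i ≤ n)
    (hhigh : ∀ j : Fin (n + 1), i < (j : ℕ) → i + 1 ≤ (ρ j : ℕ)) :
    Equiv.Perm (Fin (n - i)) :=
  Equiv.ofBijective (extRFun ρ hi hhigh) (Finite.injective_iff_bijective.mp (extRFun_inj ρ hi hhigh))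

@[simp] lemma extR_apply (ρ : Equiv.Perm (Fin (n + 1))) (hi : i ≤ n) (hhigh) (j : Fin (n - i)) :
    extR ρ hi hhigh j = extRFun ρ hi hhigh j := rfl

lemma glue_symm_zero (hi : i ≤ n) (σ : Equiv.Perm (Fin i)) (τ : Equiv.Perm (Fin (n - i))) :
    (((glue hi σ τ).symm 0 : Fin (n + 1)) : ℕ) = i := by
  have h : glue hi σ τ ⟨i, by omega⟩ = 0 := by
    apply Fin.ext
    simpa using glueFun_eq hi σ τ ⟨i, by omega⟩ rfl
  have := congrArg (glue hi σ τ).symm h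
  rw [Equiv.symm_apply_apply] at this
  rw [← this]

lemma glue_mem (hi : i ≤ n) {σ : Equiv.Perm (Fin i)} {τ : Equiv.Perm (Fin (n - i))}
    (hσ : σ ∈ Av i) (hτ : τ ∈ Av (n - i)) : glue hi σ τ ∈ Av (n + 1) := by
  rw [mem_Av]
  rintro a b c hab hbc ⟨h1, h2⟩
  simp only [glue_apply, Fin.lt_def] at h1 h2
  rw [Fin.lt_def] at hab hbc
  rcases lt_trichotomy (a : ℕ) i with hA | hA | hA
  · have hva := glueFun_lt hi σ τ a ⟨a, hA⟩ rfl
    have hσa := (σ ⟨a, hA⟩).isLt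
    rcases lt_trichotomy (c : ℕ) i with hC | hC | hC
    · have hB : (b : ℕ) < i := by omega
      have hvb := glueFun_lt hi σ τ b ⟨b, hB⟩ rfl
      have hvc := glueFun_lt hi σ τ c ⟨c, hC⟩ rfl
      exact mem_Av.mp hσ ⟨a, hA⟩ ⟨b, hB⟩ ⟨c, hC⟩ (Fin.mk_lt_mk.mpr (by omega))
        (Fin.mk_lt_mk.mpr (by omega))
        ⟨Fin.lt_def.mpr (by omega), Fin.lt_def.mpr (by omega)⟩
    · have hvc := glueFun_eq hi σ τ c hC
      omega
    · have hvc := glueFun_gt hi σ τ c ⟨(c : ℕ) - (i + 1), by have := c.isLt; omega⟩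
        (by simp; omega)
      omega
  · have hva := glueFun_eq hi σ τ a hA
    omega
  · have hB : i < (b : ℕ) := by omega
    have hC : i < (c : ℕ) := by omega
    have hva := glueFun_gt hi σ τ a ⟨(a : ℕ) - (i + 1), by have := a.isLt; omega⟩ (by simp; omega)
    have hvb := glueFun_gt hi σ τ b ⟨(b : ℕ) - (i + 1), by have := b.isLt; omega⟩ (by simp; omega)
    have hvc := glueFun_gt hi σ τ c ⟨(c : ℕ) - (i + 1), by have := c.isLt; omega⟩ (by simp; omega)
    exact mem_Av.mp hτ ⟨(a : ℕ) - (i + 1), by have := a.isLt; omega⟩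
      ⟨(b : ℕ) - (i + 1), by have := b.isLt; omega⟩
      ⟨(c : ℕ) - (i + 1), by have := c.isLt; omega⟩
      (Fin.mk_lt_mk.mpr (by omega)) (Fin.mk_lt_mk.mpr (by omega))
      ⟨Fin.lt_def.mpr (by omega), Fin.lt_def.mpr (by omega)⟩

lemma extLFun_val (ρ : Equiv.Perm (Fin (n + 1))) (hi : i ≤ n)
    (hlow : ∀ j : Fin (n + 1), (j : ℕ) < i → 1 ≤ (ρ j : ℕ) ∧ (ρ j : ℕ) ≤ i)
    (j : Fin i) (j' : Fin (n + 1)) (h : (j' : ℕ) = (j : ℕ)) :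
    (extLFun ρ hi hlow j : ℕ) = (ρ j' : ℕ) - 1 := by
  simp only [extLFun, Fin.val_mk]
  have : (⟨(j : ℕ), by omega⟩ : Fin (n + 1)) = j' := Fin.ext (by simp [h])
  rw [this]

lemma extRFun_val (ρ : Equiv.Perm (Fin (n + 1))) (hi : i ≤ n)
    (hhigh : ∀ j : Fin (n + 1), i < (j : ℕ) → i + 1 ≤ (ρ j : ℕ))
    (j : Fin (n - i)) (j' : Fin (n + 1)) (h : (j' : ℕ) = (j : ℕ) + i + 1) :
    (extRFun ρ hi hhigh j : ℕ) = (ρ j' : ℕ) - (i + 1) := by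
  simp only [extRFun, Fin.val_mk]
  have : (⟨(j : ℕ) + i + 1, by have := j.isLt; omega⟩ : Fin (n + 1)) = j' := Fin.ext (by simp [h])
  rw [this]

section memb

variable {ρ : Equiv.Perm (Fin (n + 1))} (hρ : ρ ∈ Av (n + 1)) (hi : i ≤ n)
  (hfi : ((ρ.symm 0 : Fin (n + 1)) : ℕ) = i)

include hρ hi hfi

lemma extL_mem :
    extL ρ hi (fun j hj => val_low hρ hi hfi hj) ∈ Av i := by
  rw [mem_Av]
  rintro a b c hab hbc ⟨h1, h2⟩
  obtain ⟨a', ha'⟩ : ∃ a' : Fin (n + 1), (a' : ℕ) = (a : ℕ) := ⟨⟨a, by omega⟩, rfl⟩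
  obtain ⟨b', hb'⟩ : ∃ b' : Fin (n + 1), (b' : ℕ) = (b : ℕ) := ⟨⟨b, by omega⟩, rfl⟩
  obtain ⟨c', hc'⟩ : ∃ c' : Fin (n + 1), (c' : ℕ) = (c : ℕ) := ⟨⟨c, by omega⟩, rfl⟩
  rw [Fin.lt_def] at h1 h2 hab hbc
  rw [extL_apply, extL_apply, extLFun_val ρ hi _ b b' hb', extLFun_val ρ hi _ c c' hc'] at h1
  rw [extL_apply, extL_apply, extLFun_val ρ hi _ c c' hc', extLFun_val ρ hi _ a a' ha'] at h2
  have hla := val_low hρ hi hfi (j := a') (by have := a.isLt; omega)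
  have hlb := val_low hρ hi hfi (j := b') (by have := b.isLt; omega)
  have hlc := val_low hρ hi hfi (j := c') (by have := c.isLt; omega)
  exact mem_Av.mp hρ a' b' c' (Fin.lt_def.mpr (by omega)) (Fin.lt_def.mpr (by omega))
    ⟨Fin.lt_def.mpr (by omega), Fin.lt_def.mpr (by omega)⟩

lemma extR_mem :
    extR ρ hi (fun j hj => val_high hρ hi hfi hj) ∈ Av (n - i) := by
  rw [mem_Av]
  rintro a b c hab hbc ⟨h1, h2⟩
  obtain ⟨a', ha'⟩ : ∃ a' : Fin (n + 1), (a' : ℕ) = (a : ℕ) + i + 1 :=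
    ⟨⟨(a : ℕ) + i + 1, by have := a.isLt; omega⟩, rfl⟩
  obtain ⟨b', hb'⟩ : ∃ b' : Fin (n + 1), (b' : ℕ) = (b : ℕ) + i + 1 :=
    ⟨⟨(b : ℕ) + i + 1, by have := b.isLt; omega⟩, rfl⟩
  obtain ⟨c', hc'⟩ : ∃ c' : Fin (n + 1), (c' : ℕ) = (c : ℕ) + i + 1 :=
    ⟨⟨(c : ℕ) + i + 1, by have := c.isLt; omega⟩, rfl⟩
  rw [Fin.lt_def] at h1 h2 hab hbc
  rw [extR_apply, extR_apply, extRFun_val ρ hi _ b b' hb', extRFun_val ρ hi _ c c' hc'] at h1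
  rw [extR_apply, extR_apply, extRFun_val ρ hi _ c c' hc', extRFun_val ρ hi _ a a' ha'] at h2
  have hha := val_high hρ hi hfi (j := a') (by omega)
  have hhb := val_high hρ hi hfi (j := b') (by omega)
  have hhc := val_high hρ hi hfi (j := c') (by omega)
  exact mem_Av.mp hρ a' b' c' (Fin.lt_def.mpr (by omega)) (Fin.lt_def.mpr (by omega))
    ⟨Fin.lt_def.mpr (by omega), Fin.lt_def.mpr (by omega)⟩

lemma glue_ext : glue hi (extL ρ hi (fun j hj => val_low hρ hi hfi hj))
    (extR ρ hi (fun j hj => val_high hρ hi hfi hj)) = ρ := by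
  apply Equiv.ext
  intro a
  apply Fin.ext
  rw [glue_apply]
  rcases lt_trichotomy (a : ℕ) i with hA | hA | hA
  · rw [glueFun_lt _ _ _ a ⟨a, hA⟩ rfl, extL_apply, extLFun_val ρ hi _ ⟨a, hA⟩ a rfl]
    have := val_low hρ hi hfi (j := a) hA
    omega
  · rw [glueFun_eq _ _ _ a hA]
    have : a = ⟨i, by omega⟩ := Fin.ext hA
    rw [this, apply_mid hρ hi hfi]
    rfl
  · have hk : (a : ℕ) = ((⟨(a : ℕ) - (i + 1), by have := a.isLt; omega⟩ : Fin (n - i)) : ℕ)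
        + i + 1 := by simp; omega
    rw [glueFun_gt _ _ _ a ⟨(a : ℕ) - (i + 1), by have := a.isLt; omega⟩ hk, extR_apply,
      extRFun_val ρ hi _ ⟨(a : ℕ) - (i + 1), by have := a.isLt; omega⟩ a hk]
    have := val_high hρ hi hfi (j := a) hA
    omega

end memb

lemma extL_glue (hi : i ≤ n) (σ : Equiv.Perm (Fin i)) (τ : Equiv.Perm (Fin (n - i)))
    (hlow : ∀ j : Fin (n + 1), (j : ℕ) < i →
      1 ≤ ((glue hi σ τ) j : ℕ) ∧ ((glue hi σ τ) j : ℕ) ≤ i) :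
    extL (glue hi σ τ) hi hlow = σ := by
  apply Equiv.ext
  intro j
  apply Fin.ext
  obtain ⟨j', hj'⟩ : ∃ j' : Fin (n + 1), (j' : ℕ) = (j : ℕ) := ⟨⟨j, by omega⟩, rfl⟩
  rw [extL_apply, extLFun_val _ hi _ j j' hj']
  rw [show ((glue hi σ τ) j' : ℕ) = (σ j : ℕ) + 1 from glueFun_lt hi σ τ j' j hj']
  omega

lemma extR_glue (hi : i ≤ n) (σ : Equiv.Perm (Fin i)) (τ : Equiv.Perm (Fin (n - i)))
    (hhigh : ∀ j : Fin (n + 1), i < (j : ℕ) → i + 1 ≤ ((glue hi σ τ) j : ℕ)) :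
    extR (glue hi σ τ) hi hhigh = τ := by
  apply Equiv.ext
  intro j
  apply Fin.ext
  obtain ⟨j', hj'⟩ : ∃ j' : Fin (n + 1), (j' : ℕ) = (j : ℕ) + i + 1 :=
    ⟨⟨(j : ℕ) + i + 1, by have := j.isLt; omega⟩, rfl⟩
  rw [extR_apply, extRFun_val _ hi _ j j' hj']
  rw [show ((glue hi σ τ) j' : ℕ) = (τ j : ℕ) + i + 1 from glueFun_gt hi σ τ j' j hj']
  omega

lemma av_card_rec (n : ℕ) :
    (Av (n + 1)).card = ∑ i ∈ Finset.range (n + 1), (Av i).card * (Av (n - i)).card := by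
  rw [Finset.card_eq_sum_card_fiberwise
    (f := fun ρ : Equiv.Perm (Fin (n + 1)) => ((ρ.symm 0 : Fin (n + 1)) : ℕ))
    (t := Finset.range (n + 1)) (fun ρ _ => Finset.mem_range.mpr (ρ.symm 0).isLt)]
  refine Finset.sum_congr rfl ?_
  intro i hi
  have hin : i ≤ n := by have := Finset.mem_range.mp hi; omega
  rw [← Finset.card_product]
  refine Finset.card_bij'
    (fun ρ hρ =>
      (extL ρ hin (fun j hj => val_low (Finset.mem_filter.mp hρ).1 hin
          (Finset.mem_filter.mp hρ).2 hj),
       extR ρ hin (fun j hj => val_high (Finset.mem_filter.mp hρ).1 hin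
          (Finset.mem_filter.mp hρ).2 hj)))
    (fun p _ => glue hin p.1 p.2)
    ?_ ?_ ?_ ?_
  · intro ρ hρ
    exact Finset.mem_product.mpr ⟨extL_mem (Finset.mem_filter.mp hρ).1 hin
      (Finset.mem_filter.mp hρ).2, extR_mem (Finset.mem_filter.mp hρ).1 hin
      (Finset.mem_filter.mp hρ).2⟩
  · intro p hp
    have hp' := Finset.mem_product.mp hp
    exact Finset.mem_filter.mpr ⟨glue_mem hin hp'.1 hp'.2, glue_symm_zero hin p.1 p.2⟩
  · intro ρ hρ
    exact glue_ext (Finset.mem_filter.mp hρ).1 hin (Finset.mem_filter.mp hρ).2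
  · intro p hp
    exact Prod.ext (extL_glue hin p.1 p.2 _) (extR_glue hin p.1 p.2 _)

/-- The number of (3,1,2)-avoiding permutations of {1,…,n} is the n-th Catalan number. -/
theorem card_avoiding_312_eq_catalan (n : ℕ) :
    (Finset.univ.filter (fun ρ : Equiv.Perm (Fin n) =>
      ∀ a b c : Fin n, a < b → b < c → ¬(ρ b < ρ c ∧ ρ c < ρ a))).card = catalan n := by
  show (Av n).card = catalan n
  induction n using Nat.strong_induction_on with
  | _ n ih =>
    match n, ih with
    | 0, _ =>
      have h0 : Av 0 = Finset.univ := Finset.filter_true_of_mem (fun ρ _ a b c _ _ => a.elim0)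
      rw [h0, catalan_zero, Finset.card_univ]
      simp
    | m + 1, ih =>
      rw [av_card_rec, catalan_succ, Fin.sum_univ_eq_sum_range (fun i => catalan i * catalan (m - i))]
      refine Finset.sum_congr rfl ?_
      intro i hi
      have him := Finset.mem_range.mp hi
      rw [ih i (by omega), ih (m - i) (by omega)]
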